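/- Let Z ⊆ [0,1]^d be a compact set, and let P be a probability measure on Z whose density f with respect to Lebesgue measure satisfies f(z) ≥ c > 0 for all z ∈ Z, with Z = [0,1]^d. Then for every L-Lipschitz function h : Z → [−R, R], one has sup_{z∈Z} |h(z)| ≤ (4/c)^{1/(d+2)} (2R + 2√d L)^{d/(d+2)} ‖h‖_{L²(P)}^{2/(d+2)}. -/

import Mathlib

open MeasureTheory

set_option maxHeartbeats 1000000

/-- If `P` has density `f ≥ c > 0` w.r.t. Lebesgue measure on the cube `Z = [0,1]^d`,
then every `L`-Lipschitz (w.r.t. the Euclidean norm) function `h : Z → [−R,R]` satisfies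
`sup_{z∈Z} |h(z)| ≤ (4/c)^{1/(d+2)} (2R + 2√d L)^{d/(d+2)} ‖h‖_{L²(P)}^{2/(d+2)}`. -/
theorem stmt_2 (d : ℕ) (c R : ℝ) (L : NNReal) (hc : 0 < c) (hR : 0 ≤ R)
    (Z : Set (EuclideanSpace ℝ (Fin d)))
    (hZ : Z = {z | ∀ i, z i ∈ Set.Icc (0 : ℝ) 1})
    (f : EuclideanSpace ℝ (Fin d) → ℝ)
    (hf : ∀ z ∈ Z, c ≤ f z)
    (P : Measure (EuclideanSpace ℝ (Fin d))) [IsProbabilityMeasure P]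
    (hPf : P = (volume.restrict Z).withDensity (fun z => ENNReal.ofReal (f z)))
    (h : EuclideanSpace ℝ (Fin d) → ℝ)
    (hLip : LipschitzOnWith L h Z)
    (hbd : ∀ z ∈ Z, |h z| ≤ R) :
    ∀ z ∈ Z, |h z| ≤
      (4 / c) ^ ((1 : ℝ) / (d + 2)) * (2 * R + 2 * Real.sqrt d * L) ^ ((d : ℝ) / (d + 2)) *
        (∫ z, (h z) ^ 2 ∂P) ^ ((1 : ℝ) / (d + 2)) := by
  intro z₀ hz₀
  set I : ℝ := ∫ z, (h z) ^ 2 ∂P with hI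
  have hI0 : 0 ≤ I := integral_nonneg fun z => sq_nonneg _
  set M : ℝ := |h z₀| with hMdef
  have hM0 : 0 ≤ M := abs_nonneg _
  set K : ℝ := 2 * R + 2 * Real.sqrt d * L with hKdef
  have hsqrtd0 : 0 ≤ Real.sqrt d := Real.sqrt_nonneg _
  have hL0 : (0:ℝ) ≤ L := L.coe_nonneg
  have hK0 : 0 ≤ K := by positivity
  rcases eq_or_lt_of_le hM0 with hM0' | hMpos
  · rw [← hM0']
    have : (0:ℝ) ≤ I ^ ((1:ℝ) / (d + 2)) := Real.rpow_nonneg hI0 _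
    positivity
  -- main case: M > 0
  have hMR : M ≤ R := hbd z₀ hz₀
  have hKpos : 0 < K := by nlinarith
  -- choose the side length s
  set s : ℝ := if 2 * Real.sqrt d * (L:ℝ) ≤ M then 1 else M / (2 * Real.sqrt d * L) with hsdef
  have hspos : 0 < s := by
    rw [hsdef]; split_ifs with hcase
    · norm_num
    · push_neg at hcase
      exact div_pos hMpos (lt_trans hMpos hcase)
  have hsle1 : s ≤ 1 := by
    rw [hsdef]; split_ifs with hcase
    · exact le_refl 1
    · push_neg at hcase
      exact (div_le_one (lt_trans hMpos hcase)).mpr hcase.le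
  have hLs : (L:ℝ) * (Real.sqrt d * s) ≤ M / 2 := by
    rw [hsdef]; split_ifs with hcase
    · nlinarith
    · push_neg at hcase
      have hden : 0 < 2 * Real.sqrt d * (L:ℝ) := lt_trans hMpos hcase
      have hsd : Real.sqrt d ≠ 0 := by intro h0; rw [h0] at hden; norm_num at hden
      have hLne : (L:ℝ) ≠ 0 := by intro h0; rw [h0] at hden; norm_num at hden
      have heq : (L:ℝ) * (Real.sqrt d * (M / (2 * Real.sqrt d * L))) = M / 2 := by
        field_simp
      rw [heq]
  have hMKs : M ≤ K * s := by
    rw [hsdef]; split_ifs with hcase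
    · nlinarith
    · push_neg at hcase
      have hden : 0 < 2 * Real.sqrt d * (L:ℝ) := lt_trans hMpos hcase
      have : 2 * Real.sqrt d * (L:ℝ) * (M / (2 * Real.sqrt d * L)) = M := by
        field_simp
        exact div_self (ne_of_gt (by linarith))
      nlinarith [mul_le_mul_of_nonneg_right (show 2 * Real.sqrt d * (L:ℝ) ≤ K by nlinarith)
        (le_of_lt (div_pos hMpos hden))]
  -- the box Q
  set a : Fin d → ℝ := fun i => min (z₀ i) (1 - s) with hadef
  set Q : Set (EuclideanSpace ℝ (Fin d)) :=
    (MeasurableEquiv.toLp 2 (Fin d → ℝ)).symm ⁻¹' (Set.univ.pi fun i => Set.Icc (a i) (a i + s))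
    with hQdef
  have hQmem : ∀ z, z ∈ Q ↔ ∀ i, z i ∈ Set.Icc (a i) (a i + s) := fun z =>
    ⟨fun hz i => hz i (Set.mem_univ i), fun hz i _ => hz i⟩
  have hQmeas : MeasurableSet Q :=
    (MeasurableEquiv.toLp 2 (Fin d → ℝ)).symm.measurable
      (MeasurableSet.univ_pi fun i => measurableSet_Icc)
  have hQZ : Q ⊆ Z := by
    intro z hz
    rw [hZ]
    intro i
    have hi := (hQmem z).mp hz i
    have hai : 0 ≤ a i := by
      rw [hadef]
      have h1 : 0 ≤ z₀ i := by
        have := hZ ▸ hz₀; exact (this i).1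
      have h2 : 0 ≤ 1 - s := by linarith
      exact le_min h1 h2
    have hai2 : a i + s ≤ 1 := by
      have : a i ≤ 1 - s := min_le_right _ _
      linarith
    exact ⟨le_trans hai hi.1, le_trans hi.2 hai2⟩
  have hz₀Q : z₀ ∈ Q := by
    rw [hQmem]
    intro i
    have h1 : z₀ i ≤ 1 := by have := hZ ▸ hz₀; exact (this i).2
    constructor
    · exact min_le_left _ _
    · rcases min_cases (z₀ i) (1 - s) with ⟨heq, _⟩ | ⟨heq, _⟩ <;> rw [hadef] <;> simp only [heq] <;> linarith
  have hvolQ : volume Q = ENNReal.ofReal s ^ d := by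
    rw [hQdef, (EuclideanSpace.volume_preserving_symm_measurableEquiv_toLp (Fin d)).measure_preimage
      ((MeasurableSet.univ_pi fun i => measurableSet_Icc).nullMeasurableSet)]
    rw [volume_pi_pi]
    simp [Real.volume_Icc]
  -- lower bound on h on Q
  have hhalf : ∀ z ∈ Q, M / 2 ≤ |h z| := by
    intro z hz
    have hdist : dist z z₀ ≤ Real.sqrt d * s := by
      rw [EuclideanSpace.dist_eq]
      have hsum : (∑ i, dist (z i) (z₀ i) ^ 2) ≤ (d : ℝ) * s ^ 2 := by
        calc (∑ i, dist (z i) (z₀ i) ^ 2) ≤ ∑ _i : Fin d, s ^ 2 := by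
              apply Finset.sum_le_sum
              intro i _
              have hd : dist (z i) (z₀ i) ≤ s := by
                have := Real.dist_le_of_mem_Icc ((hQmem z).mp hz i) ((hQmem z₀).mp hz₀Q i)
                simpa using this
              exact pow_le_pow_left₀ dist_nonneg hd 2
          _ = (d : ℝ) * s ^ 2 := by simp [Finset.card_univ]
      calc Real.sqrt (∑ i, dist (z i) (z₀ i) ^ 2) ≤ Real.sqrt ((d:ℝ) * s ^ 2) :=
            Real.sqrt_le_sqrt hsum
        _ = Real.sqrt d * s := by
            rw [Real.sqrt_mul (Nat.cast_nonneg d), Real.sqrt_sq hspos.le]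
    have hd2 : dist (h z) (h z₀) ≤ (L:ℝ) * (Real.sqrt d * s) := by
      calc dist (h z) (h z₀) ≤ (L:ℝ) * dist z z₀ := hLip.dist_le_mul z (hQZ hz) z₀ hz₀
        _ ≤ (L:ℝ) * (Real.sqrt d * s) := by
            exact mul_le_mul_of_nonneg_left hdist hL0
    have hd3 : |h z - h z₀| ≤ M / 2 := le_trans (by rw [Real.dist_eq] at hd2; exact hd2) hLs
    have := abs_sub_abs_le_abs_sub (h z₀) (h z)
    rw [abs_sub_comm] at this
    calc M / 2 = M - M / 2 := by ring
      _ ≤ |h z| := by rw [hMdef]; linarith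
  -- measurability facts
  have hZmeas : MeasurableSet Z := by
    rw [hZ]
    have : {z : EuclideanSpace ℝ (Fin d) | ∀ i, z i ∈ Set.Icc (0:ℝ) 1} =
        (MeasurableEquiv.toLp 2 (Fin d → ℝ)).symm ⁻¹' (Set.univ.pi fun _ => Set.Icc (0:ℝ) 1) := by
      ext z
      exact ⟨fun hz i _ => hz i, fun hz i => hz i (Set.mem_univ i)⟩
    rw [this]
    exact (MeasurableEquiv.toLp 2 (Fin d → ℝ)).symm.measurable
      (MeasurableSet.univ_pi fun i => measurableSet_Icc)
  have hPZc : P Zᶜ = 0 := by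
    rw [hPf, withDensity_apply _ hZmeas.compl, Measure.restrict_restrict hZmeas.compl,
      Set.compl_inter_self, Measure.restrict_empty, lintegral_zero_measure]
  have haeZ : ∀ᵐ z ∂P, z ∈ Z := by
    rw [ae_iff]
    exact hPZc
  -- integrability
  obtain ⟨g, hg, hgh⟩ := hLip.extend_real
  have hae : h =ᵐ[P] g := haeZ.mono fun z hz => hgh hz
  have hasm : AEStronglyMeasurable h P := ⟨g, hg.continuous.stronglyMeasurable, hae⟩
  have hint : Integrable (fun z => h z ^ 2) P := by
    refine Integrable.mono' (integrable_const (R ^ 2)) (hasm.pow 2) ?_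
    refine haeZ.mono fun z hz => ?_
    rw [Real.norm_eq_abs, abs_pow]
    exact pow_le_pow_left₀ (abs_nonneg _) (hbd z hz) 2
  -- lower bound on P Q
  have hPQ : ENNReal.ofReal (c * s ^ d) ≤ P Q := by
    rw [hPf, withDensity_apply _ hQmeas, Measure.restrict_restrict hQmeas,
      Set.inter_eq_self_of_subset_left hQZ]
    calc ENNReal.ofReal (c * s ^ d) = ENNReal.ofReal c * volume Q := by
          rw [hvolQ, ENNReal.ofReal_mul hc.le, ENNReal.ofReal_pow hspos.le]
      _ = ∫⁻ _z in Q, ENNReal.ofReal c ∂volume := by rw [setLIntegral_const]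
      _ ≤ ∫⁻ z in Q, ENNReal.ofReal (f z) ∂volume := by
          refine lintegral_mono_ae ((ae_restrict_iff' hQmeas).mpr (ae_of_all _ fun z hz => ?_))
          exact ENNReal.ofReal_le_ofReal (hf z (hQZ hz))
  have hPQr : c * s ^ d ≤ (P Q).toReal := by
    have := ENNReal.toReal_mono (measure_ne_top P Q) hPQ
    rwa [ENNReal.toReal_ofReal (by positivity)] at this
  -- integral chain
  have step2 : (M / 2) ^ 2 * (P Q).toReal ≤ ∫ z in Q, h z ^ 2 ∂P := by
    refine setIntegral_ge_of_const_le_real hQmeas (measure_ne_top P Q) (fun x hx => ?_)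
      hint.integrableOn
    calc (M / 2) ^ 2 ≤ |h x| ^ 2 := pow_le_pow_left₀ (by positivity) (hhalf x hx) 2
      _ = h x ^ 2 := sq_abs _
  have step1 : ∫ z in Q, h z ^ 2 ∂P ≤ I := setIntegral_le_integral hint
    (ae_of_all _ fun z => sq_nonneg _)
  have hchain : c * s ^ d * (M / 2) ^ 2 ≤ I := by
    have h1 : (M / 2) ^ 2 * (c * s ^ d) ≤ (M / 2) ^ 2 * (P Q).toReal :=
      mul_le_mul_of_nonneg_left hPQr (by positivity)
    nlinarith
  -- polynomial bound
  have hMd : M ^ d ≤ K ^ d * s ^ d := by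
    calc M ^ d ≤ (K * s) ^ d := pow_le_pow_left₀ hM0 hMKs d
      _ = K ^ d * s ^ d := mul_pow K s d
  have hfinal : M ^ (d + 2) ≤ 4 / c * K ^ d * I := by
    have hchain' : s ^ d * M ^ 2 ≤ 4 / c * I := by
      rw [div_mul_eq_mul_div, le_div_iff₀ hc]
      nlinarith [hchain]
    calc M ^ (d + 2) = M ^ d * M ^ 2 := pow_add M d 2
      _ ≤ K ^ d * s ^ d * M ^ 2 := mul_le_mul_of_nonneg_right hMd (sq_nonneg _)
      _ = K ^ d * (s ^ d * M ^ 2) := by ring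
      _ ≤ K ^ d * (4 / c * I) := mul_le_mul_of_nonneg_left hchain' (pow_nonneg hK0 d)
      _ = 4 / c * K ^ d * I := by ring
  -- rpow conclusion
  have hp : (0:ℝ) < (d:ℝ) + 2 := by positivity
  have hrhs0 : 0 ≤ 4 / c * K ^ d * I := by positivity
  have hMle : M ^ ((d:ℝ) + 2) ≤ 4 / c * K ^ d * I := by
    have : ((d:ℝ) + 2) = ((d + 2 : ℕ) : ℝ) := by push_cast; ring
    rw [this, Real.rpow_natCast]
    exact hfinal
  calc M = (M ^ ((d:ℝ) + 2)) ^ ((1:ℝ) / ((d:ℝ) + 2)) := by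
        rw [← Real.rpow_mul hM0, mul_one_div, div_self hp.ne', Real.rpow_one]
    _ ≤ (4 / c * K ^ d * I) ^ ((1:ℝ) / ((d:ℝ) + 2)) :=
        Real.rpow_le_rpow (Real.rpow_nonneg hM0 _) hMle (by positivity)
    _ = (4 / c) ^ ((1:ℝ) / (d + 2)) * K ^ ((d:ℝ) / (d + 2)) * I ^ ((1:ℝ) / (d + 2)) := by
        rw [Real.mul_rpow (by positivity) hI0, Real.mul_rpow (by positivity) (by positivity)]
        congr 1
        congr 1
        rw [← Real.rpow_natCast K d, ← Real.rpow_mul hK0, mul_one_div]
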